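/- arXiv:math/0611332 — 4 statements merged into one kernel-verified Lean document; each statement's English description precedes it below -/
import Mathlib

section
/- For every positive integer n ≥ 2, the alternating binomial sum ∑_{k=2}^{n} C(n,k) (−1)^k / (k−1) equals 1 − n + n·H_{n−1}, where H_{n−1} = ∑_{j=1}^{n−1} 1/j is the (n−1)-st harmonic number. -/
open Finset

private lemma alt_one (n : ℕ) :
    ∑ k ∈ range (n + 1), ((n + 1).choose (k + 1) : ℝ) * (-1) ^ k = 1 := by
  have h : (∑ m ∈ range (n + 1 + 1), ((-1) ^ m * (n + 1).choose m : ℤ)) = 0 :=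
    Int.alternating_sum_range_choose_of_ne (Nat.succ_ne_zero n)
  rw [Finset.sum_range_succ'] at h
  simp only [pow_zero, one_mul, Nat.choose_zero_right, Nat.cast_one] at h
  have h' : (∑ m ∈ range (n + 1), ((-1) ^ (m + 1) * (n + 1).choose (m + 1) : ℤ)) = -1 := by
    linarith
  have h2 : (∑ m ∈ range (n + 1), ((-1) ^ m * (n + 1).choose (m + 1) : ℤ)) = 1 := by
    have : (∑ m ∈ range (n + 1), ((-1) ^ (m + 1) * (n + 1).choose (m + 1) : ℤ))
        = -∑ m ∈ range (n + 1), ((-1) ^ m * (n + 1).choose (m + 1) : ℤ) := by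
      rw [← Finset.sum_neg_distrib]
      exact Finset.sum_congr rfl fun m _ => by ring
    rw [this] at h'
    linarith
  have h3 : ∑ k ∈ range (n + 1), ((n + 1).choose (k + 1) : ℝ) * (-1) ^ k
      = ∑ k ∈ range (n + 1), ((-1) ^ k * ((n + 1).choose (k + 1) : ℤ) : ℤ) := by
    push_cast
    exact Finset.sum_congr rfl fun m _ => by ring
  rw [h3, h2]
  norm_num

private lemma harm_id (n : ℕ) :
    ∑ k ∈ range n, (n.choose (k + 1) : ℝ) * (-1) ^ k / ((k : ℝ) + 1) =
      ∑ j ∈ range n, 1 / ((j : ℝ) + 1) := by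
  induction n with
  | zero => simp
  | succ n ih =>
    have pascal : ∀ k, ((n + 1).choose (k + 1) : ℝ) = (n.choose (k + 1) : ℝ) + (n.choose k : ℝ) := by
      intro k
      rw [Nat.choose_succ_succ]
      push_cast
      ring
    have split : ∑ k ∈ range (n + 1), ((n + 1).choose (k + 1) : ℝ) * (-1) ^ k / ((k : ℝ) + 1)
        = (∑ k ∈ range (n + 1), (n.choose (k + 1) : ℝ) * (-1) ^ k / ((k : ℝ) + 1))
          + ∑ k ∈ range (n + 1), (n.choose k : ℝ) * (-1) ^ k / ((k : ℝ) + 1) := by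
      rw [← Finset.sum_add_distrib]
      exact Finset.sum_congr rfl fun k _ => by rw [pascal k]; ring
    have first : ∑ k ∈ range (n + 1), (n.choose (k + 1) : ℝ) * (-1) ^ k / ((k : ℝ) + 1)
        = ∑ k ∈ range n, (n.choose (k + 1) : ℝ) * (-1) ^ k / ((k : ℝ) + 1) := by
      rw [Finset.sum_range_succ, Nat.choose_succ_self]
      simp
    have key : ∀ k, (n.choose k : ℝ) * (-1) ^ k / ((k : ℝ) + 1)
        = ((n + 1).choose (k + 1) : ℝ) * (-1) ^ k / ((n : ℝ) + 1) := by
      intro k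
      have h := Nat.add_one_mul_choose_eq n k
      have h' : ((n : ℝ) + 1) * (n.choose k : ℝ) = ((n + 1).choose (k + 1) : ℝ) * ((k : ℝ) + 1) := by
        exact_mod_cast congrArg (fun m : ℕ => (m : ℝ)) h
      have hk : ((k : ℝ) + 1) ≠ 0 := by positivity
      have hn : ((n : ℝ) + 1) ≠ 0 := by positivity
      rw [div_eq_div_iff hk hn]
      linear_combination ((-1 : ℝ) ^ k) * h' 
    have second : ∑ k ∈ range (n + 1), (n.choose k : ℝ) * (-1) ^ k / ((k : ℝ) + 1)
        = 1 / ((n : ℝ) + 1) := by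
      rw [Finset.sum_congr rfl fun k _ => key k, ← Finset.sum_div, alt_one]
    rw [split, first, second, ih, Finset.sum_range_succ]

private lemma main_aux (m : ℕ) :
    ∑ k ∈ range m, ((m + 1).choose (k + 2) : ℝ) * (-1) ^ k / ((k : ℝ) + 1) =
      1 - ((m : ℝ) + 1) + ((m : ℝ) + 1) * ∑ j ∈ range m, 1 / ((j : ℝ) + 1) := by
  induction m with
  | zero => simp
  | succ m ih =>
    have pascal : ∀ k, ((m + 2).choose (k + 2) : ℝ)
        = ((m + 1).choose (k + 2) : ℝ) + ((m + 1).choose (k + 1) : ℝ) := by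
      intro k
      rw [Nat.choose_succ_succ (m + 1) (k + 1)]
      push_cast
      ring
    have split : ∑ k ∈ range (m + 1), ((m + 2).choose (k + 2) : ℝ) * (-1) ^ k / ((k : ℝ) + 1)
        = (∑ k ∈ range (m + 1), ((m + 1).choose (k + 2) : ℝ) * (-1) ^ k / ((k : ℝ) + 1))
          + ∑ k ∈ range (m + 1), ((m + 1).choose (k + 1) : ℝ) * (-1) ^ k / ((k : ℝ) + 1) := by
      rw [← Finset.sum_add_distrib]
      exact Finset.sum_congr rfl fun k _ => by rw [pascal k]; ring
    have first : ∑ k ∈ range (m + 1), ((m + 1).choose (k + 2) : ℝ) * (-1) ^ k / ((k : ℝ) + 1)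
        = ∑ k ∈ range m, ((m + 1).choose (k + 2) : ℝ) * (-1) ^ k / ((k : ℝ) + 1) := by
      rw [Finset.sum_range_succ]
      have : (m + 1).choose (m + 2) = 0 := Nat.choose_eq_zero_of_lt (by omega)
      simp [this]
    rw [show m + 1 + 1 = m + 2 from rfl] at *
    rw [split, first, ih, harm_id (m + 1), Finset.sum_range_succ]
    push_cast
    have hm : ((m : ℝ) + 1) ≠ 0 := by positivity
    field_simp
    ring

theorem stmt_0 (n : ℕ) (hn : 2 ≤ n) :
    ∑ k ∈ Finset.Icc 2 n, (n.choose k : ℝ) * (-1) ^ k / ((k : ℝ) - 1) =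
      1 - (n : ℝ) + (n : ℝ) * ∑ j ∈ Finset.Icc 1 (n - 1), (1 : ℝ) / (j : ℝ) := by
  obtain ⟨m, rfl⟩ : ∃ m, n = m + 2 := ⟨n - 2, by omega⟩
  have hIcc1 : ∑ k ∈ Finset.Icc 2 (m + 2), ((m + 2).choose k : ℝ) * (-1) ^ k / ((k : ℝ) - 1)
      = ∑ k ∈ range (m + 1), ((m + 2).choose (k + 2) : ℝ) * (-1) ^ k / ((k : ℝ) + 1) := by
    rw [← Finset.Ico_add_one_right_eq_Icc, Finset.sum_Ico_eq_sum_range]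
    refine Finset.sum_congr (by congr 1) fun k _ => ?_
    push_cast
    ring_nf
  have hIcc2 : ∑ j ∈ Finset.Icc 1 (m + 2 - 1), (1 : ℝ) / (j : ℝ)
      = ∑ j ∈ range (m + 1), 1 / ((j : ℝ) + 1) := by
    rw [← Finset.Ico_add_one_right_eq_Icc, Finset.sum_Ico_eq_sum_range]
    refine Finset.sum_congr (by congr 1) fun j _ => ?_
    push_cast
    ring_nf
  rw [hIcc1, hIcc2, main_aux (m + 1)]
  push_cast
  ring
end

section
/- For every integer n ≥ 2, d_n := ∑_{k=2}^{n} C(n,k)(−1)^k/ζ(k) equals ∑_{ℓ≥1} μ(ℓ)[(1 − 1/ℓ)^n − 1 + n/ℓ], where μ is the Möbius function; the series converges absolutely. -/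
open Finset ArithmeticFunction
open scoped ArithmeticFunction.Moebius

lemma binom_aux (n : ℕ) (hn : 2 ≤ n) (x : ℂ) :
    ∑ k ∈ Icc 2 n, (n.choose k : ℂ) * (-x) ^ k = (1 - x) ^ n - 1 + n * x := by
  have hset : range (n + 1) = insert 0 (insert 1 (Icc 2 n)) := by
    ext k; simp only [mem_range, mem_insert, mem_Icc]; omega
  have hb := add_pow (-x) 1 n
  rw [hset, sum_insert (by simp), sum_insert (by simp)] at hb
  simp only [one_pow, mul_one, pow_zero, pow_one, Nat.choose_zero_right, Nat.choose_one_right,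
    Nat.cast_one] at hb
  have : (-x + 1) ^ n = (1 - x) ^ n := by ring_nf
  rw [this] at hb
  have := hb
  rw [show ∑ k ∈ Icc 2 n, (-x) ^ k * (n.choose k : ℂ) =
      ∑ k ∈ Icc 2 n, (n.choose k : ℂ) * (-x) ^ k from sum_congr rfl fun k _ => by ring] at this
  linear_combination -this

lemma summable_mu_pow (k : ℕ) (hk : 2 ≤ k) :
    Summable (fun ℓ : ℕ => (μ (ℓ + 1) : ℂ) * (1 / ((ℓ : ℂ) + 1)) ^ k) := by
  apply Summable.of_norm_bounded (g := fun ℓ : ℕ => (1 / ((ℓ : ℝ) + 1)) ^ 2)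
  · have : Summable (fun ℓ : ℕ => ((1:ℝ) / (ℓ : ℝ)) ^ 2) := by
      simpa [div_pow] using Real.summable_one_div_nat_pow.mpr (by norm_num : 1 < 2)
    simpa using (summable_nat_add_iff 1).mpr this
  · intro ℓ
    rw [norm_mul, norm_pow]
    have h1 : ‖(μ (ℓ + 1) : ℂ)‖ ≤ 1 := by
      rw [show (μ (ℓ + 1) : ℂ) = ((μ (ℓ + 1) : ℤ) : ℂ) from rfl]
      rw [Complex.norm_intCast]
      exact_mod_cast abs_moebius_le_one
    have h2 : ‖1 / ((ℓ : ℂ) + 1)‖ = 1 / ((ℓ : ℝ) + 1) := by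
      rw [show ((ℓ:ℂ)+1) = ((ℓ+1:ℕ):ℂ) by push_cast; ring, norm_div, norm_one,
        Complex.norm_natCast]
      push_cast; ring
    have hle : (0:ℝ) < 1 / ((ℓ : ℝ) + 1) := by positivity
    have h3 : ‖1 / ((ℓ : ℂ) + 1)‖ ^ k ≤ (1 / ((ℓ : ℝ) + 1)) ^ 2 := by
      rw [h2]
      exact pow_le_pow_of_le_one hle.le (by
        rw [div_le_one (by positivity)]; linarith [Nat.cast_nonneg (α := ℝ) ℓ]) hk
    calc ‖(μ (ℓ + 1) : ℂ)‖ * ‖1 / ((ℓ : ℂ) + 1)‖ ^ k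
        ≤ 1 * (1 / ((ℓ : ℝ) + 1)) ^ 2 := by
          apply mul_le_mul h1 h3 (by positivity) (by norm_num)
      _ = _ := one_mul _

lemma zeta_inv_eq (k : ℕ) (hk : 2 ≤ k) :
    (riemannZeta (k : ℂ))⁻¹ = ∑' ℓ : ℕ, (μ (ℓ + 1) : ℂ) * (1 / ((ℓ : ℂ) + 1)) ^ k := by
  have hre : 1 < ((k : ℂ)).re := by
    simp only [Complex.natCast_re]
    exact_mod_cast hk.trans_lt' one_lt_two
  have hmul := ArithmeticFunction.LSeries_zeta_mul_Lseries_moebius (s := (k : ℂ)) hre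
  rw [LSeries_zeta_eq_riemannZeta hre] at hmul
  have hL : LSeries (fun m => (μ m : ℂ)) (k : ℂ) = (riemannZeta (k : ℂ))⁻¹ :=
    eq_inv_of_mul_eq_one_left (by rw [mul_comm]; exact hmul)
  rw [← hL, LSeries]
  have hs : Summable (fun m => LSeries.term (fun m => (μ m : ℂ)) (k : ℂ) m) :=
    ArithmeticFunction.LSeriesSummable_moebius_iff.mpr hre
  rw [Summable.tsum_eq_zero_add hs, LSeries.term_zero, zero_add]
  apply tsum_congr
  intro ℓ
  rw [LSeries.term_of_ne_zero (Nat.succ_ne_zero ℓ)]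
  rw [show (((ℓ + 1 : ℕ)) : ℂ) ^ (k : ℂ) = (((ℓ + 1 : ℕ)) : ℂ) ^ k from Complex.cpow_natCast _ _]
  push_cast
  rw [div_pow, one_pow]
  ring

open Finset in
theorem stmt_15 (n : ℕ) (hn : 2 ≤ n) :
    Summable (fun ℓ : ℕ =>
        ‖(ArithmeticFunction.moebius (ℓ + 1) : ℂ) *
          ((1 - 1 / ((ℓ : ℂ) + 1)) ^ n - 1 + (n : ℂ) / ((ℓ : ℂ) + 1))‖) ∧
      ∑ k ∈ Finset.Icc 2 n, (n.choose k : ℂ) * (-1) ^ k / riemannZeta (k : ℂ) =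
        ∑' ℓ : ℕ, (ArithmeticFunction.moebius (ℓ + 1) : ℂ) *
          ((1 - 1 / ((ℓ : ℂ) + 1)) ^ n - 1 + (n : ℂ) / ((ℓ : ℂ) + 1)) := by
  have key : ∀ ℓ : ℕ, (μ (ℓ + 1) : ℂ) *
      ((1 - 1 / ((ℓ : ℂ) + 1)) ^ n - 1 + (n : ℂ) / ((ℓ : ℂ) + 1)) =
      ∑ k ∈ Icc 2 n, ((n.choose k : ℂ) * (-1) ^ k) * ((μ (ℓ + 1) : ℂ) * (1 / ((ℓ : ℂ) + 1)) ^ k) := by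
    intro ℓ
    rw [show (n : ℂ) / ((ℓ : ℂ) + 1) = n * (1 / ((ℓ : ℂ) + 1)) by ring,
      ← binom_aux n hn (1 / ((ℓ : ℂ) + 1)), mul_sum]
    refine sum_congr rfl fun k _ => ?_
    rw [neg_pow]
    ring
  have hsum : Summable (fun ℓ : ℕ => (μ (ℓ + 1) : ℂ) *
      ((1 - 1 / ((ℓ : ℂ) + 1)) ^ n - 1 + (n : ℂ) / ((ℓ : ℂ) + 1))) := by
    simp_rw [key]
    exact summable_sum fun k hk => ((summable_mu_pow k (mem_Icc.mp hk).1).mul_left _)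
  refine ⟨hsum.norm, ?_⟩
  calc ∑ k ∈ Icc 2 n, (n.choose k : ℂ) * (-1) ^ k / riemannZeta (k : ℂ)
      = ∑ k ∈ Icc 2 n, ∑' ℓ : ℕ, ((n.choose k : ℂ) * (-1) ^ k) *
          ((μ (ℓ + 1) : ℂ) * (1 / ((ℓ : ℂ) + 1)) ^ k) := by
        refine sum_congr rfl fun k hk => ?_
        rw [div_eq_mul_inv, zeta_inv_eq k (mem_Icc.mp hk).1, ← tsum_mul_left]
    _ = ∑' ℓ : ℕ, ∑ k ∈ Icc 2 n, ((n.choose k : ℂ) * (-1) ^ k) *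
          ((μ (ℓ + 1) : ℂ) * (1 / ((ℓ : ℂ) + 1)) ^ k) := by
        rw [Summable.tsum_finsetSum fun k hk => (summable_mu_pow k (mem_Icc.mp hk).1).mul_left _]
    _ = _ := tsum_congr fun ℓ => (key ℓ).symm
end

section
/- The function D(x) = ∑_{ℓ≥1} μ(ℓ)[e^{−x/ℓ} − 1 + x/ℓ] is differentiable on (0,∞) with D'(x) = −∑_{ℓ≥1} (μ(ℓ)/ℓ)[e^{−x/ℓ} − 1], and D'(x) is bounded uniformly on (0,∞). -/
open Finset ArithmeticFunction Real
open scoped ArithmeticFunction.Moebius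

-- basic exp bounds
lemma exp_bd1 {t : ℝ} (ht : 0 ≤ t) : |Real.exp (-t) - 1| ≤ t := by
  have h1 : Real.exp (-t) ≤ 1 := by
    rw [Real.exp_le_one_iff]; linarith
  have h2 : 1 - t ≤ Real.exp (-t) := by
    have := Real.add_one_le_exp (-t); linarith
  rw [abs_le]; constructor <;> linarith

lemma exp_bd2 {t : ℝ} (ht : 0 ≤ t) : |Real.exp (-t) - 1 + t| ≤ t ^ 2 / 2 := by
  have hlow : 0 ≤ Real.exp (-t) - 1 + t := by
    have := Real.add_one_le_exp (-t); linarith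
  have key : ∀ s : ℝ, 0 ≤ s → Real.exp (-s) - 1 + s ≤ s ^ 2 / 2 := by
    set F : ℝ → ℝ := fun s => s ^ 2 / 2 - (Real.exp (-s) - 1 + s) with hF
    have hd : ∀ s : ℝ, HasDerivAt F (s - (-Real.exp (-s) + 1)) s := by
      intro s
      have h1 : HasDerivAt (fun s : ℝ => s ^ 2 / 2) s s := by
        simpa using ((hasDerivAt_pow 2 s).div_const 2)
      have h2 : HasDerivAt (fun s : ℝ => Real.exp (-s) - 1 + s)
          (Real.exp (-s) * (-1) + 1) s := by
        have := ((hasDerivAt_id' s).neg.exp.sub_const 1).add (hasDerivAt_id' s)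
        exact this
      have := h1.sub h2
      refine this.congr_deriv ?_
      ring
    have hm : Monotone F := by
      apply monotone_of_deriv_nonneg
      · exact fun s => ((hd s).differentiableAt)
      · intro s
        rw [(hd s).deriv]
        have := Real.add_one_le_exp (-s); linarith
    intro s hs
    have h := hm hs
    simp only [hF, neg_zero, Real.exp_zero] at h
    nlinarith [h]
  have := key t ht
  rw [abs_of_nonneg hlow]; exact this

lemma moeb_div_sum (m : ℕ) (hm : m ≠ 0) :
    ∑ d ∈ m.divisors, (μ d : ℤ) = if m = 1 then 1 else 0 := by
  have := congrArg (fun f : ArithmeticFunction ℤ => f m) moebius_mul_coe_zeta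
  simp only [coe_mul_zeta_apply, one_apply] at this
  exact this

lemma key_identity (N : ℕ) (hN : 1 ≤ N) :
    ∑ n ∈ Finset.Icc 1 N, (μ n : ℤ) * (N / n : ℕ) = 1 := by
  have hdiv : ∀ m ∈ Finset.Icc 1 N, m.divisors = (Finset.Icc 1 N).filter (· ∣ m) := by
    intro m hm
    simp only [Finset.mem_Icc] at hm
    ext d
    simp only [Nat.mem_divisors, Finset.mem_filter, Finset.mem_Icc]
    constructor
    · rintro ⟨hd, hm0⟩
      refine ⟨⟨Nat.one_le_iff_ne_zero.2 ?_, le_trans (Nat.le_of_dvd (by omega) hd) hm.2⟩, hd⟩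
      rintro rfl; exact hm0 (zero_dvd_iff.mp hd) |>.elim
    · rintro ⟨_, hd⟩; exact ⟨hd, by omega⟩
  have h1 : ∑ m ∈ Finset.Icc 1 N, (∑ d ∈ m.divisors, (μ d : ℤ)) = 1 := by
    rw [Finset.sum_congr rfl (fun m hm => moeb_div_sum m (by simp at hm; omega))]
    rw [Finset.sum_ite_eq' (Finset.Icc 1 N) 1 (fun _ => (1:ℤ))]
    simp [hN]
  calc ∑ n ∈ Finset.Icc 1 N, (μ n : ℤ) * (N / n : ℕ)
      = ∑ n ∈ Finset.Icc 1 N, ∑ m ∈ (Finset.Icc 1 N).filter (n ∣ ·), (μ n : ℤ) := by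
        refine Finset.sum_congr rfl fun n hn => ?_
        rw [Finset.sum_const, nsmul_eq_mul, mul_comm]
        congr 2
        have hIcc : Finset.Icc 1 N = Finset.Ioc 0 N := by ext a; simp; omega
        rw [hIcc]
        exact (Nat.Ioc_filter_dvd_card_eq_div N n).symm
    _ = ∑ m ∈ Finset.Icc 1 N, ∑ n ∈ (Finset.Icc 1 N).filter (· ∣ m), (μ n : ℤ) := by
        simp_rw [Finset.sum_filter]
        rw [Finset.sum_comm]
    _ = 1 := by
        rw [← h1]
        exact Finset.sum_congr rfl fun m hm => by rw [hdiv m hm]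

lemma moeb_abs_le (n : ℕ) : |(μ n : ℝ)| ≤ 1 := by
  have := ArithmeticFunction.abs_moebius_le_one (n := n)
  exact_mod_cast this

lemma moeb_partial_bound (N : ℕ) :
    |∑ n ∈ Finset.Icc 1 N, (μ n : ℝ) / n| ≤ 1 := by
  rcases Nat.eq_zero_or_pos N with rfl | hN
  · simp
  have hNR : (0:ℝ) < N := by exact_mod_cast hN
  rw [← mul_le_mul_iff_right₀ hNR, mul_one, ← abs_of_pos hNR, ← abs_mul, Finset.mul_sum]
  have step1 : ∑ n ∈ Finset.Icc 1 N, (N:ℝ) * ((μ n : ℝ) / n) =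
      (∑ n ∈ Finset.Icc 1 N, (μ n : ℝ) * ((N / n : ℕ) : ℝ))
      + ∑ n ∈ Finset.Icc 1 N, (μ n : ℝ) * ((N:ℝ)/n - ((N / n : ℕ) : ℝ)) := by
    rw [← Finset.sum_add_distrib]
    refine Finset.sum_congr rfl fun n hn => ?_
    simp only [Finset.mem_Icc] at hn
    have hn0 : (n:ℝ) ≠ 0 := by
      have : 0 < n := hn.1
      positivity
    field_simp
    ring
  rw [step1]
  have h1 : ∑ n ∈ Finset.Icc 1 N, (μ n : ℝ) * ((N / n : ℕ) : ℝ) = 1 := by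
    have := key_identity N hN
    have := congrArg (fun z : ℤ => (z : ℝ)) this
    push_cast at this
    convert this using 2
    congr 1
  -- fractional part bounds
  have hfrac0 : ∀ n ∈ Finset.Icc 1 N, 0 ≤ (N:ℝ)/n - ((N / n : ℕ) : ℝ) := by
    intro n hn
    simp only [Finset.mem_Icc] at hn
    have h := Nat.cast_div_le (m := N) (n := n) (α := ℝ)
    linarith
  have hfrac1 : ∀ n ∈ Finset.Icc 1 N, (N:ℝ)/n - ((N / n : ℕ) : ℝ) ≤ 1 := by
    intro n hn
    simp only [Finset.mem_Icc] at hn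
    have hn0 : 0 < n := hn.1
    have hmod : N % n < n := Nat.mod_lt _ hn0
    have hdm : n * (N / n) + N % n = N := Nat.div_add_mod N n
    have hcast : (N:ℝ) = n * ((N/n : ℕ) : ℝ) + ((N % n : ℕ) : ℝ) := by
      exact_mod_cast hdm.symm
    have hnR : (0:ℝ) < n := by exact_mod_cast hn0
    rw [div_sub' (ne_of_gt hnR), div_le_one hnR]
    have : ((N % n : ℕ) : ℝ) < n := by exact_mod_cast hmod
    nlinarith
  have hfracN : (N:ℝ)/N - ((N / N : ℕ) : ℝ) = 0 := by
    rw [Nat.div_self hN, div_self (ne_of_gt hNR)]; simp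
  -- bound the fractional sum
  have h2 : |∑ n ∈ Finset.Icc 1 N, (μ n : ℝ) * ((N:ℝ)/n - ((N / n : ℕ) : ℝ))| ≤ (N:ℝ) - 1 := by
    calc |∑ n ∈ Finset.Icc 1 N, (μ n : ℝ) * ((N:ℝ)/n - ((N / n : ℕ) : ℝ))|
        ≤ ∑ n ∈ Finset.Icc 1 N, |(μ n : ℝ) * ((N:ℝ)/n - ((N / n : ℕ) : ℝ))| :=
          Finset.abs_sum_le_sum_abs _ _
      _ ≤ ∑ n ∈ Finset.Icc 1 N, (if n = N then 0 else 1) := by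
          refine Finset.sum_le_sum fun n hn => ?_
          rw [abs_mul]
          by_cases hnN : n = N
          · subst hnN
            simp [hfracN]
          · simp only [hnN, if_false]
            have := hfrac0 n hn; have := hfrac1 n hn
            have hb : |(N:ℝ)/n - ((N / n : ℕ) : ℝ)| ≤ 1 := by
              rw [abs_of_nonneg (hfrac0 n hn)]; exact hfrac1 n hn
            calc |(μ n : ℝ)| * |(N:ℝ)/n - ((N / n : ℕ) : ℝ)|
                ≤ 1 * 1 := mul_le_mul (moeb_abs_le n) hb (abs_nonneg _) zero_le_one
              _ = 1 := one_mul 1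
      _ = (N:ℝ) - 1 := by
          have he : ∀ n ∈ Finset.Icc 1 N, (if n = N then (0:ℝ) else 1)
              = 1 - (if n = N then (1:ℝ) else 0) := by
            intro n _; split <;> norm_num
          rw [Finset.sum_congr rfl he, Finset.sum_sub_distrib, Finset.sum_const,
            Finset.sum_ite_eq' (Finset.Icc 1 N) N (fun _ => (1:ℝ))]
          have hmem : N ∈ Finset.Icc 1 N := by simp [Finset.mem_Icc]; omega
          rw [if_pos hmem, Nat.card_Icc]
          have : (1:ℕ) ≤ N + 1 := by omega
          push_cast [Nat.cast_sub this]
          ring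
  rw [h1, abs_of_pos hNR]
  calc |1 + ∑ n ∈ Finset.Icc 1 N, (μ n : ℝ) * ((N:ℝ)/n - ((N / n : ℕ) : ℝ))|
      ≤ 1 + ((N:ℝ) - 1) := by
        refine le_trans (abs_add_le _ _) ?_
        simp only [abs_one]
        linarith [h2]
    _ = (N:ℝ) := by ring

lemma G_bound (n : ℕ) :
    |∑ ℓ ∈ Finset.range n, (μ (ℓ + 1) : ℝ) / ((ℓ : ℝ) + 1)| ≤ 1 := by
  have h : ∑ ℓ ∈ Finset.range n, (μ (ℓ + 1) : ℝ) / ((ℓ : ℝ) + 1)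
      = ∑ m ∈ Finset.Icc 1 n, (μ m : ℝ) / m := by
    rw [← Finset.Ico_add_one_right_eq_Icc, Finset.sum_Ico_eq_sum_range]
    simp only [Nat.add_sub_cancel]
    refine Finset.sum_congr rfl fun i _ => ?_
    rw [add_comm 1 i]
    push_cast
    ring
  rw [h]; exact moeb_partial_bound n

lemma partial_abel {x : ℝ} (hx : 0 < x) (N : ℕ) :
    |∑ ℓ ∈ Finset.range N, (μ (ℓ + 1) : ℝ) / ((ℓ : ℝ) + 1) *
      (Real.exp (-x / ((ℓ : ℝ) + 1)) - 1)| ≤ 2 := by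
  set a : ℕ → ℝ := fun ℓ => (μ (ℓ + 1) : ℝ) / ((ℓ : ℝ) + 1) with ha
  set c : ℕ → ℝ := fun ℓ => Real.exp (-x / ((ℓ : ℝ) + 1)) - 1 with hc
  have hc_le : ∀ ℓ, c ℓ ≤ 0 := by
    intro ℓ
    have : Real.exp (-x / ((ℓ : ℝ) + 1)) ≤ 1 := by
      rw [Real.exp_le_one_iff]
      have : (0:ℝ) < (ℓ:ℝ) + 1 := by positivity
      have := div_nonneg hx.le this.le
      simp only [neg_div]; linarith
    simp only [hc]; linarith
  have hc_ge : ∀ ℓ, -1 ≤ c ℓ := by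
    intro ℓ
    have := Real.exp_pos (-x / ((ℓ : ℝ) + 1))
    simp only [hc]; linarith
  have hc_mono : ∀ i, c i ≤ c (i + 1) := by
    intro i
    simp only [hc]
    push_cast
    have h1 : (0:ℝ) < (i:ℝ) + 1 := by positivity
    have h2 : ((i:ℝ) + 1) ≤ ((i:ℝ) + 1 + 1) := by linarith
    have h3 := div_le_div_of_nonneg_left hx.le h1 h2
    have h4 : -x/((i:ℝ)+1) ≤ -x/((i:ℝ)+1+1) := by
      rw [neg_div, neg_div]; linarith
    have := Real.exp_le_exp.mpr h4
    linarith
  have hG : ∀ n, |∑ ℓ ∈ Finset.range n, a ℓ| ≤ 1 := G_bound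
  have key := Finset.sum_range_by_parts (M := ℝ) c a N
  have habs : ∑ ℓ ∈ Finset.range N, a ℓ * c ℓ
      = ∑ i ∈ Finset.range N, c i • a i := by
    refine Finset.sum_congr rfl fun i _ => ?_
    simp [mul_comm]
  rw [habs, key]
  have h1 : |c (N - 1) • ∑ i ∈ Finset.range N, a i| ≤ 1 := by
    rw [smul_eq_mul, abs_mul]
    have hcabs : |c (N-1)| ≤ 1 := by
      rw [abs_le]; exact ⟨hc_ge _, (hc_le _).trans zero_le_one⟩
    calc |c (N-1)| * |∑ i ∈ Finset.range N, a i| ≤ 1 * 1 :=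
          mul_le_mul hcabs (hG N) (abs_nonneg _) zero_le_one
      _ = 1 := one_mul 1
  have h2 : |∑ i ∈ Finset.range (N - 1), (c (i + 1) - c i) • ∑ j ∈ Finset.range (i + 1), a j| ≤ 1 := by
    calc |∑ i ∈ Finset.range (N - 1), (c (i + 1) - c i) • ∑ j ∈ Finset.range (i + 1), a j|
        ≤ ∑ i ∈ Finset.range (N - 1), |(c (i + 1) - c i) • ∑ j ∈ Finset.range (i + 1), a j| :=
          Finset.abs_sum_le_sum_abs _ _
      _ ≤ ∑ i ∈ Finset.range (N - 1), (c (i + 1) - c i) := by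
          refine Finset.sum_le_sum fun i _ => ?_
          rw [smul_eq_mul, abs_mul, abs_of_nonneg (by linarith [hc_mono i])]
          calc (c (i+1) - c i) * |∑ j ∈ Finset.range (i + 1), a j|
              ≤ (c (i+1) - c i) * 1 := by
                apply mul_le_mul_of_nonneg_left (hG _) (by linarith [hc_mono i])
            _ = c (i+1) - c i := mul_one _
      _ = c (N - 1) - c 0 := by
          rw [Finset.sum_range_sub (f := c)]
      _ ≤ 1 := by linarith [hc_le (N-1), hc_ge 0]
  calc |c (N - 1) • ∑ i ∈ Finset.range N, a i
        - ∑ i ∈ Finset.range (N - 1), (c (i + 1) - c i) • ∑ j ∈ Finset.range (i + 1), a j|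
      ≤ |c (N - 1) • ∑ i ∈ Finset.range N, a i|
        + |∑ i ∈ Finset.range (N - 1), (c (i + 1) - c i) • ∑ j ∈ Finset.range (i + 1), a j| :=
        abs_sub _ _
    _ ≤ 2 := by linarith

lemma sq_summable : Summable (fun ℓ : ℕ => 1 / ((ℓ : ℝ) + 1) ^ 2) := by
  have h : Summable (fun n : ℕ => 1 / (n : ℝ) ^ 2) :=
    Real.summable_one_div_nat_pow.mpr one_lt_two
  have h2 := (summable_nat_add_iff 1).mpr h
  refine h2.congr fun n => ?_
  push_cast
  ring

lemma term_hasDeriv (ℓ : ℕ) (y : ℝ) :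
    HasDerivAt (fun y : ℝ => (μ (ℓ + 1) : ℝ) *
        (Real.exp (-y / ((ℓ : ℝ) + 1)) - 1 + y / ((ℓ : ℝ) + 1)))
      (-((μ (ℓ + 1) : ℝ) / ((ℓ : ℝ) + 1) * (Real.exp (-y / ((ℓ : ℝ) + 1)) - 1))) y := by
  have hA : ((ℓ : ℝ) + 1) ≠ 0 := by positivity
  have h1 : HasDerivAt (fun y : ℝ => -y / ((ℓ : ℝ) + 1)) (-1 / ((ℓ : ℝ) + 1)) y :=
    (hasDerivAt_id y).neg.div_const _
  have h2 := h1.exp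
  have h3 := (h2.sub_const 1).add ((hasDerivAt_id y).div_const ((ℓ : ℝ) + 1))
  have h4 := h3.const_mul ((μ (ℓ + 1) : ℝ))
  refine h4.congr_deriv ?_
  field_simp
  ring

theorem stmt_17 :
    (∀ x : ℝ, 0 < x →
        HasDerivAt
          (fun y : ℝ => ∑' ℓ : ℕ, (ArithmeticFunction.moebius (ℓ + 1) : ℝ) *
            (Real.exp (-y / ((ℓ : ℝ) + 1)) - 1 + y / ((ℓ : ℝ) + 1)))
          (-∑' ℓ : ℕ, (ArithmeticFunction.moebius (ℓ + 1) : ℝ) / ((ℓ : ℝ) + 1) *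
            (Real.exp (-x / ((ℓ : ℝ) + 1)) - 1)) x) ∧
      ∃ M : ℝ, ∀ x : ℝ, 0 < x →
        |∑' ℓ : ℕ, (ArithmeticFunction.moebius (ℓ + 1) : ℝ) / ((ℓ : ℝ) + 1) *
          (Real.exp (-x / ((ℓ : ℝ) + 1)) - 1)| ≤ M := by
  constructor
  · intro x hx
    have hA : ∀ ℓ : ℕ, (0:ℝ) < (ℓ : ℝ) + 1 := fun ℓ => by positivity
    have hu : Summable (fun ℓ : ℕ => 2 * x * (1 / ((ℓ : ℝ) + 1) ^ 2)) :=
      sq_summable.mul_left _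
    have hmem : x ∈ Set.Ioo (0:ℝ) (2*x) := ⟨hx, by linarith⟩
    have main := hasDerivAt_tsum_of_isPreconnected hu isOpen_Ioo
      (convex_Ioo (0:ℝ) (2*x)).isPreconnected
      (g := fun ℓ y => (μ (ℓ + 1) : ℝ) *
        (Real.exp (-y / ((ℓ : ℝ) + 1)) - 1 + y / ((ℓ : ℝ) + 1)))
      (g' := fun ℓ y => -((μ (ℓ + 1) : ℝ) / ((ℓ : ℝ) + 1) *
        (Real.exp (-y / ((ℓ : ℝ) + 1)) - 1)))
      (fun ℓ y _ => term_hasDeriv ℓ y)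
      (fun ℓ y hy => ?_) hmem ?_ hmem
    · have : (∑' ℓ : ℕ, -((μ (ℓ + 1) : ℝ) / ((ℓ : ℝ) + 1) *
          (Real.exp (-x / ((ℓ : ℝ) + 1)) - 1)))
          = -∑' ℓ : ℕ, ((μ (ℓ + 1) : ℝ) / ((ℓ : ℝ) + 1) *
          (Real.exp (-x / ((ℓ : ℝ) + 1)) - 1)) := tsum_neg
      rw [this] at main
      exact main
    · -- derivative bound on Ioo 0 (2x)
      obtain ⟨hy0, hy2⟩ := hy
      rw [Real.norm_eq_abs, abs_neg, abs_mul, abs_div]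
      have ht : (0:ℝ) ≤ y / ((ℓ:ℝ)+1) := by positivity
      have hb : |Real.exp (-y / ((ℓ : ℝ) + 1)) - 1| ≤ y / ((ℓ:ℝ)+1) := by
        have := exp_bd1 ht
        rwa [← neg_div] at this
      rw [abs_of_pos (hA ℓ)]
      have h1 : |(μ (ℓ+1) : ℝ)| / ((ℓ:ℝ)+1) ≤ 1 / ((ℓ:ℝ)+1) := by
        gcongr
        exact moeb_abs_le _
      calc |(μ (ℓ+1) : ℝ)| / ((ℓ:ℝ)+1) * |Real.exp (-y / ((ℓ : ℝ) + 1)) - 1|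
          ≤ 1 / ((ℓ:ℝ)+1) * (y / ((ℓ:ℝ)+1)) :=
            mul_le_mul h1 hb (abs_nonneg _) (by positivity)
        _ = y * (1 / ((ℓ:ℝ)+1)^2) := by rw [div_mul_div_comm, one_mul]; ring_nf
        _ ≤ 2 * x * (1 / ((ℓ:ℝ)+1)^2) := by
            apply mul_le_mul_of_nonneg_right hy2.le (by positivity)
    · -- summability at x
      apply Summable.of_norm_bounded (g := fun ℓ : ℕ => x^2/2 * (1 / ((ℓ : ℝ) + 1) ^ 2))
        (sq_summable.mul_left _)
      intro ℓ
      rw [Real.norm_eq_abs, abs_mul]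
      have ht : (0:ℝ) ≤ x / ((ℓ:ℝ)+1) := by positivity
      have hb : |Real.exp (-x / ((ℓ : ℝ) + 1)) - 1 + x / ((ℓ:ℝ)+1)| ≤ (x / ((ℓ:ℝ)+1))^2/2 := by
        have := exp_bd2 ht
        rwa [← neg_div] at this
      calc |(μ (ℓ+1) : ℝ)| * |Real.exp (-x / ((ℓ : ℝ) + 1)) - 1 + x / ((ℓ:ℝ)+1)|
          ≤ 1 * ((x / ((ℓ:ℝ)+1))^2/2) :=
            mul_le_mul (moeb_abs_le _) hb (abs_nonneg _) zero_le_one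
        _ = x^2/2 * (1 / ((ℓ : ℝ) + 1) ^ 2) := by
            rw [div_pow]; ring
  · refine ⟨2, fun x hx => ?_⟩
    have hA : ∀ ℓ : ℕ, (0:ℝ) < (ℓ : ℝ) + 1 := fun ℓ => by positivity
    have hsum : Summable (fun ℓ : ℕ => (μ (ℓ + 1) : ℝ) / ((ℓ : ℝ) + 1) *
        (Real.exp (-x / ((ℓ : ℝ) + 1)) - 1)) := by
      apply Summable.of_norm_bounded (g := fun ℓ : ℕ => x * (1 / ((ℓ : ℝ) + 1) ^ 2))
        (sq_summable.mul_left _)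
      intro ℓ
      rw [Real.norm_eq_abs, abs_mul, abs_div]
      have ht : (0:ℝ) ≤ x / ((ℓ:ℝ)+1) := by positivity
      have hb : |Real.exp (-x / ((ℓ : ℝ) + 1)) - 1| ≤ x / ((ℓ:ℝ)+1) := by
        have := exp_bd1 ht
        rwa [← neg_div] at this
      rw [abs_of_pos (hA ℓ)]
      have h1 : |(μ (ℓ+1) : ℝ)| / ((ℓ:ℝ)+1) ≤ 1 / ((ℓ:ℝ)+1) := by
        gcongr
        exact moeb_abs_le _
      calc |(μ (ℓ+1) : ℝ)| / ((ℓ:ℝ)+1) * |Real.exp (-x / ((ℓ : ℝ) + 1)) - 1|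
          ≤ 1 / ((ℓ:ℝ)+1) * (x / ((ℓ:ℝ)+1)) :=
            mul_le_mul h1 hb (abs_nonneg _) (by positivity)
        _ = x * (1 / ((ℓ:ℝ)+1)^2) := by rw [div_mul_div_comm, one_mul]; ring_nf
    have ht := hsum.hasSum.tendsto_sum_nat.abs
    exact le_of_tendsto ht (Filter.Eventually.of_forall fun N => partial_abel hx N)
end

section
/- For −2 < Re(s) < −1, ∫_0^∞ D(x) x^{s−1} dx = (∑_{ℓ≥1} μ(ℓ) ℓ^{s}) · Γ(s) = Γ(s)/ζ(−s), where D(x) = ∑_{ℓ≥1} μ(ℓ)[e^{−x/ℓ} − 1 + x/ℓ]. -/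
open MeasureTheory Real Set Filter Topology


-- basic exp inequalities
lemma expb0 {t : ℝ} (ht : 0 ≤ t) : 0 ≤ Real.exp (-t) - 1 + t := by
  have := Real.add_one_le_exp (-t); linarith

lemma expb1 {t : ℝ} (ht : 0 ≤ t) : Real.exp (-t) - 1 + t ≤ t := by
  have : Real.exp (-t) ≤ 1 := Real.exp_le_one_iff.mpr (by linarith)
  linarith

lemma expb2 {t : ℝ} (ht : 0 ≤ t) : Real.exp (-t) - 1 + t ≤ t ^ 2 / 2 := by
  set g : ℝ → ℝ := fun t => t ^ 2 / 2 - t + 1 - Real.exp (-t) with hg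
  have hderiv : ∀ x, HasDerivAt g (x - 1 + Real.exp (-x)) x := by
    intro x
    have h1 : HasDerivAt (fun x : ℝ => Real.exp (-x)) (-Real.exp (-x)) x := by
      simpa [Function.comp_def] using (Real.hasDerivAt_exp (-x)).comp x (hasDerivAt_neg x)
    have h2 : HasDerivAt (fun x : ℝ => x ^ 2 / 2 - x + 1) (x - 1) x := by
      have := (((hasDerivAt_pow 2 x).div_const 2).sub (hasDerivAt_id x)).add_const 1
      simpa using this.congr_deriv (by push_cast; ring)
    simpa [hg, Pi.sub_def] using h2.sub h1
  have hmono : MonotoneOn g (Set.Ici 0) := by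
    apply monotoneOn_of_deriv_nonneg (convex_Ici 0)
    · exact (Continuous.continuousOn (by continuity))
    · intro x hx
      exact (hderiv x).differentiableAt.differentiableWithinAt
    · intro x hx
      rw [(hderiv x).deriv]
      have := Real.add_one_le_exp (-x); linarith
  have := hmono (Set.self_mem_Ici) ht ht
  simp [hg] at this; linarith

lemma aux_int {E : Type*} [NormedAddCommGroup E] {f : ℝ → E}
    (hm : AEStronglyMeasurable f (volume.restrict (Set.Ioi 0))) {p q C : ℝ}
    (hp : -1 < p) (hq : q < -1)
    (h1 : ∀ x : ℝ, 0 < x → x ≤ 1 → ‖f x‖ ≤ C * x ^ p)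
    (h2 : ∀ x : ℝ, 1 ≤ x → ‖f x‖ ≤ C * x ^ q) :
    IntegrableOn f (Set.Ioi 0) := by
  rw [show Set.Ioi (0:ℝ) = Set.Ioc 0 1 ∪ Set.Ioi 1 from (Set.Ioc_union_Ioi_eq_Ioi zero_le_one).symm]
  apply IntegrableOn.union
  · apply Integrable.mono' (g := fun x => C * x ^ p)
    · exact ((intervalIntegrable_iff_integrableOn_Ioc_of_le zero_le_one).mp
        (intervalIntegral.intervalIntegrable_rpow' hp)).const_mul C
    · exact hm.mono_set Set.Ioc_subset_Ioi_self
    · filter_upwards [ae_restrict_mem measurableSet_Ioc] with x hx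
      exact h1 x hx.1 hx.2
  · apply Integrable.mono' (g := fun x => C * x ^ q)
    · exact (integrableOn_Ioi_rpow_of_lt hq one_pos).const_mul C
    · exact hm.mono_set (Set.Ioi_subset_Ioi zero_le_one)
    · filter_upwards [ae_restrict_mem measurableSet_Ioi] with x hx
      exact h2 x hx.le

lemma aesm_cpow (c : ℂ) :
    AEStronglyMeasurable (fun x : ℝ => (x:ℂ) ^ c) (volume.restrict (Set.Ioi 0)) := by
  apply ContinuousOn.aestronglyMeasurable ?_ measurableSet_Ioi
  apply continuousOn_of_forall_continuousAt
  intro x hx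
  exact (continuousAt_cpow_const (Complex.ofReal_mem_slitPlane.2 hx)).comp
    Complex.continuous_ofReal.continuousAt

lemma norm_mul_cpow {r x : ℝ} (hx : 0 < x) (c : ℂ) :
    ‖((r:ℝ):ℂ) * (x:ℂ) ^ c‖ = |r| * x ^ c.re := by
  rw [norm_mul, Complex.norm_real, Real.norm_eq_abs,
    Complex.norm_cpow_eq_rpow_re_of_pos hx]

lemma G2 {s : ℂ} (h1 : -1 < s.re) (h2 : s.re < 0) :
    ∫ x in Set.Ioi (0:ℝ), ((Real.exp (-x) - 1 : ℝ) : ℂ) * (x:ℂ) ^ (s - 1)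
      = Complex.Gamma s := by
  have hs0 : s ≠ 0 := fun h => by simp [h] at h2
  have habs : (0:ℝ) < ‖s‖ := by
    simpa using norm_pos_iff.mpr hs0
  set u : ℝ → ℂ := fun x => ((Real.exp (-x) - 1 : ℝ) : ℂ) with hu_def
  set u' : ℝ → ℂ := fun x => ((-Real.exp (-x) : ℝ) : ℂ) with hu'_def
  set v : ℝ → ℂ := fun x => (x:ℂ) ^ s / s with hv_def
  set v' : ℝ → ℂ := fun x => (x:ℂ) ^ (s - 1) with hv'_def
  have hexp : ∀ x : ℝ, HasDerivAt (fun x : ℝ => Real.exp (-x)) (-Real.exp (-x)) x := by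
    intro x; simpa [Function.comp_def] using (Real.hasDerivAt_exp (-x)).comp x (hasDerivAt_neg x)
  have hu : ∀ x ∈ Set.Ioi (0:ℝ), HasDerivAt u (u' x) x := by
    intro x _
    exact HasDerivAt.ofReal_comp ((hexp x).sub_const 1)
  have hv : ∀ x ∈ Set.Ioi (0:ℝ), HasDerivAt v (v' x) x := by
    intro x hx
    have hr : s - 1 ≠ -1 := fun h => hs0 (by linear_combination h)
    have := hasDerivAt_ofReal_cpow_const' (ne_of_gt hx) hr
    simpa [hv_def, hv'_def, sub_add_cancel] using this
  -- bound on |exp(-x)-1|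
  have hb : ∀ x : ℝ, 0 ≤ x → |Real.exp (-x) - 1| ≤ min x 1 := by
    intro x hx
    have e1 : Real.exp (-x) ≤ 1 := Real.exp_le_one_iff.mpr (by linarith)
    have e2 : 1 - x ≤ Real.exp (-x) := by have := Real.add_one_le_exp (-x); linarith
    have e3 : 0 < Real.exp (-x) := Real.exp_pos _
    rw [abs_sub_comm, abs_of_nonneg (by linarith)]
    exact le_min (by linarith) (by linarith)
  have hmeas : AEStronglyMeasurable (u * v') (volume.restrict (Set.Ioi 0)) := by
    have : u * v' = fun x => ((Real.exp (-x) - 1 : ℝ) : ℂ) * (x:ℂ) ^ (s - 1) := rfl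
    rw [this]
    exact ((Complex.continuous_ofReal.comp
      (by continuity)).aestronglyMeasurable.restrict).mul (aesm_cpow (s-1))
  have huv' : IntegrableOn (u * v') (Set.Ioi 0) := by
    apply aux_int (C := 1) (p := s.re) (q := s.re - 1) hmeas h1 (by linarith)
    · intro x hx hx1
      have := hb x hx.le
      have hn := norm_mul_cpow (r := Real.exp (-x) - 1) hx (s - 1)
      simp only [Pi.mul_apply, hu_def, hv'_def]
      rw [hn, Complex.sub_re, Complex.one_re, one_mul]
      calc |Real.exp (-x) - 1| * x ^ (s.re - 1) ≤ x * x ^ (s.re - 1) := by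
            apply mul_le_mul_of_nonneg_right (le_trans this (min_le_left _ _))
              (Real.rpow_nonneg hx.le _)
        _ = x ^ s.re := by
            rw [← Real.rpow_one_add' (by positivity) (by intro h; linarith)]
            ring_nf
    · intro x hx1
      have hx : (0:ℝ) < x := lt_of_lt_of_le one_pos hx1
      have := hb x hx.le
      have hn := norm_mul_cpow (r := Real.exp (-x) - 1) hx (s - 1)
      simp only [Pi.mul_apply, hu_def, hv'_def]
      rw [hn, Complex.sub_re, Complex.one_re, one_mul]
      calc |Real.exp (-x) - 1| * x ^ (s.re - 1) ≤ 1 * x ^ (s.re - 1) :=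
            mul_le_mul_of_nonneg_right (le_trans this (min_le_right _ _))
              (Real.rpow_nonneg hx.le _)
        _ = x ^ (s.re - 1) := one_mul _
  have hgamma : IntegrableOn (fun x : ℝ => ((Real.exp (-x) : ℝ):ℂ) * (x:ℂ) ^ s) (Set.Ioi 0) := by
    have := Complex.GammaIntegral_convergent (s := s + 1) (by simp; linarith)
    simpa [add_sub_cancel_right] using this
  have hu'v : IntegrableOn (u' * v) (Set.Ioi 0) := by
    have : (u' * v) = fun x => -((((Real.exp (-x) : ℝ):ℂ) * (x:ℂ) ^ s) / s) := by
      funext x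
      simp only [Pi.mul_apply, hu'_def, hv_def]
      push_cast
      ring
    rw [this]
    exact (hgamma.div_const s).neg
  have hzero : Tendsto (u * v) (𝓝[>] (0:ℝ)) (𝓝 0) := by
    apply squeeze_zero_norm' (a := fun x => x ^ (s.re + 1) / ‖s‖)
    · filter_upwards [self_mem_nhdsWithin] with x (hx : (0:ℝ) < x)
      have hn : ‖u x * v x‖ = |Real.exp (-x) - 1| * x ^ s.re / ‖s‖ := by
        simp only [hu_def, hv_def]
        rw [norm_mul, norm_div, Complex.norm_real, Real.norm_eq_abs,
          Complex.norm_cpow_eq_rpow_re_of_pos hx]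
        ring
      rw [Pi.mul_apply, hn]
      apply div_le_div_of_nonneg_right ?_ habs.le |>.trans_eq rfl
      calc |Real.exp (-x) - 1| * x ^ s.re ≤ x * x ^ s.re := by
            apply mul_le_mul_of_nonneg_right ((hb x hx.le).trans (min_le_left _ _))
              (Real.rpow_nonneg hx.le _)
        _ = x ^ (s.re + 1) := by
            rw [← Real.rpow_one_add' (by positivity) (by intro h; linarith)]
            ring_nf
    · have : Tendsto (fun x : ℝ => x ^ (s.re + 1)) (𝓝[>] (0:ℝ)) (𝓝 0) := by
        have hc : ContinuousAt (fun x : ℝ => x ^ (s.re + 1)) 0 :=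
          Real.continuousAt_rpow_const 0 _ (Or.inr (by linarith))
        have h0 : (0:ℝ) ^ (s.re + 1) = 0 := Real.zero_rpow (by intro h; linarith)
        have h' : Tendsto (fun x : ℝ => x ^ (s.re + 1)) (𝓝[>] (0:ℝ))
            (𝓝 ((0:ℝ) ^ (s.re + 1))) := hc.continuousWithinAt
        rwa [h0] at h'
      simpa using this.div_const (‖s‖)
  have hinfty : Tendsto (u * v) atTop (𝓝 0) := by
    apply squeeze_zero_norm' (a := fun x => x ^ s.re / ‖s‖)
    · filter_upwards [eventually_ge_atTop (1:ℝ)] with x hx1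
      have hx : (0:ℝ) < x := lt_of_lt_of_le one_pos hx1
      have hn : ‖u x * v x‖ = |Real.exp (-x) - 1| * x ^ s.re / ‖s‖ := by
        simp only [hu_def, hv_def]
        rw [norm_mul, norm_div, Complex.norm_real, Real.norm_eq_abs,
          Complex.norm_cpow_eq_rpow_re_of_pos hx]
        ring
      rw [Pi.mul_apply, hn]
      apply div_le_div_of_nonneg_right ?_ habs.le
      nth_rewrite 2 [show x ^ s.re = 1 * x ^ s.re by ring]
      exact mul_le_mul_of_nonneg_right ((hb x hx.le).trans (min_le_right _ _))
        (Real.rpow_nonneg hx.le _)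
    · have : Tendsto (fun x : ℝ => x ^ s.re) atTop (𝓝 0) := by
        have := tendsto_rpow_neg_atTop (y := -s.re) (by linarith)
        simpa using this
      simpa using this.div_const (‖s‖)
  have key := integral_Ioi_mul_deriv_eq_deriv_mul hu hv huv' hu'v hzero hinfty
  have hval : ∫ x in Set.Ioi (0:ℝ), u' x * v x = -Complex.Gamma s := by
    have heq : ∀ x : ℝ, u' x * v x = -((((Real.exp (-x) : ℝ):ℂ) * (x:ℂ) ^ s) / s) := by
      intro x; simp only [hu'_def, hv_def]; push_cast; ring
    rw [MeasureTheory.integral_congr_ae (Eventually.of_forall heq)]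
    rw [integral_neg, integral_div]
    have : ∫ x in Set.Ioi (0:ℝ), (((Real.exp (-x) : ℝ):ℂ) * (x:ℂ) ^ s)
        = Complex.Gamma (s + 1) := by
      rw [Complex.Gamma_eq_integral (by simp; linarith)]
      unfold Complex.GammaIntegral
      simp [add_sub_cancel_right]
    rw [this, Complex.Gamma_add_one _ hs0]
    field_simp
  rw [hval] at key
  rw [show (0:ℂ) - 0 - -Complex.Gamma s = Complex.Gamma s by ring] at key
  exact key

lemma G3 {s : ℂ} (h1 : -2 < s.re) (h2 : s.re < -1) :
    ∫ x in Set.Ioi (0:ℝ), ((Real.exp (-x) - 1 + x : ℝ) : ℂ) * (x:ℂ) ^ (s - 1)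
      = Complex.Gamma s := by
  have hs0 : s ≠ 0 := by intro h; rw [h] at h2; norm_num at h2
  have habs : (0:ℝ) < ‖s‖ := by
    simpa using norm_pos_iff.mpr hs0
  set u : ℝ → ℂ := fun x => ((Real.exp (-x) - 1 + x : ℝ) : ℂ) with hu_def
  set u' : ℝ → ℂ := fun x => ((1 - Real.exp (-x) : ℝ) : ℂ) with hu'_def
  set v : ℝ → ℂ := fun x => (x:ℂ) ^ s / s with hv_def
  set v' : ℝ → ℂ := fun x => (x:ℂ) ^ (s - 1) with hv'_def
  have hexp : ∀ x : ℝ, HasDerivAt (fun x : ℝ => Real.exp (-x)) (-Real.exp (-x)) x := by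
    intro x; simpa [Function.comp_def] using (Real.hasDerivAt_exp (-x)).comp x (hasDerivAt_neg x)
  have hu : ∀ x ∈ Set.Ioi (0:ℝ), HasDerivAt u (u' x) x := by
    intro x _
    have : HasDerivAt (fun x : ℝ => Real.exp (-x) - 1 + x) (-Real.exp (-x) + 1) x :=
      ((hexp x).sub_const 1).add (hasDerivAt_id x)
    have := this.ofReal_comp
    apply this.congr_deriv
    simp only [hu'_def]; push_cast; ring
  have hv : ∀ x ∈ Set.Ioi (0:ℝ), HasDerivAt v (v' x) x := by
    intro x hx
    have hr : s - 1 ≠ -1 := fun h => hs0 (by linear_combination h)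
    have := hasDerivAt_ofReal_cpow_const' (ne_of_gt hx) hr
    simpa [hv_def, hv'_def, sub_add_cancel] using this
  -- bounds
  have hb : ∀ x : ℝ, 0 < x → |Real.exp (-x) - 1 + x| ≤ min (x ^ 2) x := by
    intro x hx
    rw [abs_of_nonneg (expb0 hx.le)]
    refine le_min ?_ (expb1 hx.le)
    calc Real.exp (-x) - 1 + x ≤ x ^ 2 / 2 := expb2 hx.le
      _ ≤ x ^ 2 := by nlinarith
  have hb1 : ∀ x : ℝ, 0 ≤ x → |1 - Real.exp (-x)| ≤ min x 1 := by
    intro x hx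
    have e1 : Real.exp (-x) ≤ 1 := Real.exp_le_one_iff.mpr (by linarith)
    have e2 : 1 - x ≤ Real.exp (-x) := by have := Real.add_one_le_exp (-x); linarith
    have e3 : 0 < Real.exp (-x) := Real.exp_pos _
    rw [abs_of_nonneg (by linarith)]
    exact le_min (by linarith) (by linarith)
  have hmeas : AEStronglyMeasurable (u * v') (volume.restrict (Set.Ioi 0)) := by
    have : u * v' = fun x => ((Real.exp (-x) - 1 + x : ℝ) : ℂ) * (x:ℂ) ^ (s - 1) := rfl
    rw [this]
    exact ((Complex.continuous_ofReal.comp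
      (by continuity)).aestronglyMeasurable.restrict).mul (aesm_cpow (s-1))
  have huv' : IntegrableOn (u * v') (Set.Ioi 0) := by
    apply aux_int (C := 1) (p := s.re + 1) (q := s.re) hmeas (by linarith) h2
    · intro x hx hx1
      rw [Pi.mul_apply, norm_mul_cpow hx, Complex.sub_re, Complex.one_re, one_mul]
      calc |Real.exp (-x) - 1 + x| * x ^ (s.re - 1) ≤ x ^ 2 * x ^ (s.re - 1) :=
            mul_le_mul_of_nonneg_right ((hb x hx).trans (min_le_left _ _))
              (Real.rpow_nonneg hx.le _)
        _ = x ^ (s.re + 1) := by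
            rw [← Real.rpow_two, ← Real.rpow_add hx]; ring_nf
    · intro x hx1
      have hx : (0:ℝ) < x := lt_of_lt_of_le one_pos hx1
      rw [Pi.mul_apply, norm_mul_cpow hx, Complex.sub_re, Complex.one_re, one_mul]
      calc |Real.exp (-x) - 1 + x| * x ^ (s.re - 1) ≤ x * x ^ (s.re - 1) :=
            mul_le_mul_of_nonneg_right ((hb x hx).trans (min_le_right _ _))
              (Real.rpow_nonneg hx.le _)
        _ = x ^ s.re := by
            rw [← Real.rpow_one_add' (by positivity) (by intro h; linarith)]; ring_nf
  have hmeas2 : AEStronglyMeasurable (u' * v) (volume.restrict (Set.Ioi 0)) := by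
    have : u' * v = fun x => ((1 - Real.exp (-x) : ℝ) : ℂ) * ((x:ℂ) ^ s * s⁻¹) := by
      funext x; simp only [Pi.mul_apply, hu'_def, hv_def, div_eq_mul_inv]
    rw [this]
    exact ((Complex.continuous_ofReal.comp
      (by continuity)).aestronglyMeasurable.restrict).mul
      ((aesm_cpow s).mul aestronglyMeasurable_const)
  have hu'v : IntegrableOn (u' * v) (Set.Ioi 0) := by
    apply aux_int (C := (‖s‖)⁻¹) (p := s.re + 1) (q := s.re) hmeas2
      (by linarith) h2
    · intro x hx hx1
      have hn : ‖(u' * v) x‖ = |1 - Real.exp (-x)| * x ^ s.re / ‖s‖ := by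
        simp only [Pi.mul_apply, hu'_def, hv_def]
        rw [norm_mul, norm_div, Complex.norm_real, Real.norm_eq_abs,
          Complex.norm_cpow_eq_rpow_re_of_pos hx]
        ring
      rw [hn]
      calc |1 - Real.exp (-x)| * x ^ s.re / ‖s‖
          ≤ x ^ (s.re + 1) / ‖s‖ := by
            apply div_le_div_of_nonneg_right ?_ habs.le
            calc |1 - Real.exp (-x)| * x ^ s.re ≤ x * x ^ s.re :=
                  mul_le_mul_of_nonneg_right ((hb1 x hx.le).trans (min_le_left _ _))
                    (Real.rpow_nonneg hx.le _)
              _ = x ^ (s.re + 1) := by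
                  rw [← Real.rpow_one_add' (by positivity) (by intro h; linarith)]; ring_nf
        _ = (‖s‖)⁻¹ * x ^ (s.re + 1) := by ring
    · intro x hx1
      have hx : (0:ℝ) < x := lt_of_lt_of_le one_pos hx1
      have hn : ‖(u' * v) x‖ = |1 - Real.exp (-x)| * x ^ s.re / ‖s‖ := by
        simp only [Pi.mul_apply, hu'_def, hv_def]
        rw [norm_mul, norm_div, Complex.norm_real, Real.norm_eq_abs,
          Complex.norm_cpow_eq_rpow_re_of_pos hx]
        ring
      rw [hn]
      calc |1 - Real.exp (-x)| * x ^ s.re / ‖s‖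
          ≤ x ^ s.re / ‖s‖ := by
            apply div_le_div_of_nonneg_right ?_ habs.le
            calc |1 - Real.exp (-x)| * x ^ s.re ≤ 1 * x ^ s.re :=
                  mul_le_mul_of_nonneg_right ((hb1 x hx.le).trans (min_le_right _ _))
                    (Real.rpow_nonneg hx.le _)
              _ = x ^ s.re := one_mul _
        _ = (‖s‖)⁻¹ * x ^ s.re := by ring
  have hzero : Tendsto (u * v) (𝓝[>] (0:ℝ)) (𝓝 0) := by
    apply squeeze_zero_norm' (a := fun x => x ^ (s.re + 2) / ‖s‖)
    · filter_upwards [self_mem_nhdsWithin] with x (hx : (0:ℝ) < x)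
      have hn : ‖(u * v) x‖ = |Real.exp (-x) - 1 + x| * x ^ s.re / ‖s‖ := by
        simp only [Pi.mul_apply, hu_def, hv_def]
        rw [norm_mul, norm_div, Complex.norm_real, Real.norm_eq_abs,
          Complex.norm_cpow_eq_rpow_re_of_pos hx]
        ring
      rw [hn]
      apply div_le_div_of_nonneg_right ?_ habs.le
      calc |Real.exp (-x) - 1 + x| * x ^ s.re ≤ x ^ 2 * x ^ s.re :=
            mul_le_mul_of_nonneg_right ((hb x hx).trans (min_le_left _ _))
              (Real.rpow_nonneg hx.le _)
        _ = x ^ (s.re + 2) := by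
            rw [← Real.rpow_two, ← Real.rpow_add hx]; ring_nf
    · have : Tendsto (fun x : ℝ => x ^ (s.re + 2)) (𝓝[>] (0:ℝ)) (𝓝 0) := by
        have hc : ContinuousAt (fun x : ℝ => x ^ (s.re + 2)) 0 :=
          Real.continuousAt_rpow_const 0 _ (Or.inr (by linarith))
        have h0 : (0:ℝ) ^ (s.re + 2) = 0 := Real.zero_rpow (by intro h; linarith)
        have h' : Tendsto (fun x : ℝ => x ^ (s.re + 2)) (𝓝[>] (0:ℝ))
            (𝓝 ((0:ℝ) ^ (s.re + 2))) := hc.continuousWithinAt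
        rwa [h0] at h'
      simpa using this.div_const (‖s‖)
  have hinfty : Tendsto (u * v) atTop (𝓝 0) := by
    apply squeeze_zero_norm' (a := fun x => x ^ (s.re + 1) / ‖s‖)
    · filter_upwards [eventually_ge_atTop (1:ℝ)] with x hx1
      have hx : (0:ℝ) < x := lt_of_lt_of_le one_pos hx1
      have hn : ‖(u * v) x‖ = |Real.exp (-x) - 1 + x| * x ^ s.re / ‖s‖ := by
        simp only [Pi.mul_apply, hu_def, hv_def]
        rw [norm_mul, norm_div, Complex.norm_real, Real.norm_eq_abs,
          Complex.norm_cpow_eq_rpow_re_of_pos hx]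
        ring
      rw [hn]
      apply div_le_div_of_nonneg_right ?_ habs.le
      calc |Real.exp (-x) - 1 + x| * x ^ s.re ≤ x * x ^ s.re :=
            mul_le_mul_of_nonneg_right ((hb x hx).trans (min_le_right _ _))
              (Real.rpow_nonneg hx.le _)
        _ = x ^ (s.re + 1) := by
            rw [← Real.rpow_one_add' (by positivity) (by intro h; linarith)]; ring_nf
    · have : Tendsto (fun x : ℝ => x ^ (s.re + 1)) atTop (𝓝 0) := by
        have := tendsto_rpow_neg_atTop (y := -(s.re + 1)) (by linarith)
        simpa using this
      simpa using this.div_const (‖s‖)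
  have key := integral_Ioi_mul_deriv_eq_deriv_mul hu hv huv' hu'v hzero hinfty
  have hval : ∫ x in Set.Ioi (0:ℝ), u' x * v x = -Complex.Gamma s := by
    have heq : ∀ x : ℝ, u' x * v x
        = -((((Real.exp (-x) - 1 : ℝ):ℂ) * (x:ℂ) ^ ((s + 1) - 1)) / s) := by
      intro x; simp only [hu'_def, hv_def, add_sub_cancel_right]; push_cast; ring
    rw [MeasureTheory.integral_congr_ae (Eventually.of_forall heq)]
    rw [integral_neg, integral_div]
    rw [G2 (by simp; linarith) (by simp; linarith)]
    rw [Complex.Gamma_add_one _ hs0]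
    field_simp
  rw [hval] at key
  rw [show (0:ℂ) - 0 - -Complex.Gamma s = Complex.Gamma s by ring] at key
  exact key

lemma G4 (n : ℕ) {s : ℂ} (h1 : -2 < s.re) (h2 : s.re < -1) :
    ∫ x in Set.Ioi (0:ℝ),
        ((Real.exp (-x / ((n:ℝ)+1)) - 1 + x / ((n:ℝ)+1) : ℝ) : ℂ) * (x:ℂ) ^ (s - 1)
      = ((n:ℂ) + 1) ^ s * Complex.Gamma s := by
  set N : ℝ := (n:ℝ) + 1 with hN_def
  have hN : (0:ℝ) < N := by positivity
  have hN0 : ((N:ℝ):ℂ) ≠ 0 := by exact_mod_cast hN.ne'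
  have hNe : ((N:ℝ):ℂ) ^ (s - 1) ≠ 0 := by
    intro h
    exact hN0 (Complex.cpow_eq_zero_iff _ _ |>.mp h).1
  set G : ℝ → ℂ := fun x => ((Real.exp (-x) - 1 + x : ℝ) : ℂ) * (x:ℂ) ^ (s - 1) with hG_def
  have hsub := integral_comp_mul_left_Ioi G 0 (inv_pos.mpr hN)
  simp only [mul_zero, inv_inv] at hsub
  rw [G3 h1 h2] at hsub
  have hcong : ∫ x in Set.Ioi (0:ℝ),
      ((Real.exp (-x / N) - 1 + x / N : ℝ) : ℂ) * (x:ℂ) ^ (s - 1)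
      = ∫ x in Set.Ioi (0:ℝ), ((N:ℝ):ℂ) ^ (s - 1) * G (N⁻¹ * x) := by
    apply setIntegral_congr_fun measurableSet_Ioi
    intro x hx
    have hx0 : (0:ℝ) < x := hx
    have hxN : x / N = N⁻¹ * x := by field_simp
    have hc : ((N⁻¹ * x : ℝ):ℂ) ^ (s-1) = ((N⁻¹:ℝ):ℂ) ^ (s-1) * ((x:ℝ):ℂ) ^ (s-1) := by
      rw [Complex.ofReal_mul]
      exact Complex.mul_cpow_ofReal_nonneg (by positivity) hx0.le _
    have hNinv : ((N⁻¹:ℝ):ℂ) ^ (s-1) = (((N:ℝ):ℂ) ^ (s-1))⁻¹ := by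
      rw [Complex.ofReal_inv]
      exact Complex.inv_cpow _ _ (by
        rw [Complex.arg_ofReal_of_nonneg hN.le]; exact Real.pi_ne_zero.symm)
    simp only [hG_def]
    rw [hxN, hc, hNinv]
    field_simp
  rw [hcong, MeasureTheory.integral_const_mul, hsub, Complex.real_smul]
  have hpow : ((N:ℝ):ℂ) ^ (s-1) * ((N:ℝ):ℂ) = ((N:ℝ):ℂ) ^ s := by
    rw [Complex.cpow_sub _ _ hN0, Complex.cpow_one]
    field_simp
  have hcast : ((N:ℝ):ℂ) = (n:ℂ) + 1 := by push_cast [hN_def]; ring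
  calc ((N:ℝ):ℂ) ^ (s-1) * (((N:ℝ):ℂ) * Complex.Gamma s)
      = (((N:ℝ):ℂ) ^ (s-1) * ((N:ℝ):ℂ)) * Complex.Gamma s := by ring
    _ = ((n:ℂ) + 1) ^ s * Complex.Gamma s := by rw [hpow, hcast]

lemma G4r (n : ℕ) (σ : ℝ) :
    ∫ x in Set.Ioi (0:ℝ),
        (Real.exp (-x / ((n:ℝ)+1)) - 1 + x / ((n:ℝ)+1)) * x ^ (σ - 1)
      = ((n:ℝ) + 1) ^ σ *
        ∫ x in Set.Ioi (0:ℝ), (Real.exp (-x) - 1 + x) * x ^ (σ - 1) := by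
  set N : ℝ := (n:ℝ) + 1 with hN_def
  have hN : (0:ℝ) < N := by positivity
  set G : ℝ → ℝ := fun x => (Real.exp (-x) - 1 + x) * x ^ (σ - 1) with hG_def
  have hsub := integral_comp_mul_left_Ioi G 0 (inv_pos.mpr hN)
  simp only [mul_zero, inv_inv] at hsub
  have hcong : ∫ x in Set.Ioi (0:ℝ),
      (Real.exp (-x / N) - 1 + x / N) * x ^ (σ - 1)
      = ∫ x in Set.Ioi (0:ℝ), N ^ (σ - 1) * G (N⁻¹ * x) := by
    apply setIntegral_congr_fun measurableSet_Ioi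
    intro x hx
    have hx0 : (0:ℝ) < x := hx
    have hxN : x / N = N⁻¹ * x := by field_simp
    have hc : (N⁻¹ * x) ^ (σ-1) = (N⁻¹) ^ (σ-1) * x ^ (σ-1) :=
      Real.mul_rpow (by positivity) hx0.le
    have hNinv : (N⁻¹ : ℝ) ^ (σ-1) = (N ^ (σ-1))⁻¹ := Real.inv_rpow hN.le _
    have hNe : N ^ (σ - 1) ≠ 0 := by positivity
    simp only [hG_def]
    rw [hxN, hc, hNinv]
    field_simp
  rw [hcong, MeasureTheory.integral_const_mul, hsub, smul_eq_mul]
  rw [show N ^ (σ-1) * (N * ∫ x in Set.Ioi (0:ℝ), G x)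
      = (N ^ (σ-1) * N) * ∫ x in Set.Ioi (0:ℝ), G x by ring]
  congr 1
  rw [Real.rpow_sub hN, Real.rpow_one]
  field_simp

lemma moebius_sum_eq {s : ℂ} (h2 : s.re < -1) :
    ∑' ℓ : ℕ, (ArithmeticFunction.moebius (ℓ + 1) : ℂ) * ((ℓ : ℂ) + 1) ^ s
      = (riemannZeta (-s))⁻¹ := by
  have hres : 1 < (-s).re := by simp; linarith
  have hsummable := ArithmeticFunction.LSeriesSummable_moebius_iff.mpr hres
  have hL : LSeries (fun n => ((ArithmeticFunction.moebius n : ℤ) : ℂ)) (-s)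
      = (riemannZeta (-s))⁻¹ := by
    have h1 := LSeries_one_mul_Lseries_moebius hres
    rw [LSeries_one_eq_riemannZeta hres] at h1
    exact eq_inv_of_mul_eq_one_left (by rw [mul_comm]; exact h1)
  rw [← hL, LSeries]
  rw [Summable.tsum_eq_zero_add hsummable]
  rw [LSeries.term_zero, zero_add]
  apply tsum_congr
  intro n
  rw [LSeries.term_of_ne_zero (Nat.succ_ne_zero n)]
  rw [Complex.cpow_neg, div_inv_eq_mul]
  push_cast
  ring

noncomputable def Dfun (x : ℝ) : ℝ :=
  ∑' ℓ : ℕ, (ArithmeticFunction.moebius (ℓ + 1) : ℝ) *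
    (Real.exp (-x / ((ℓ : ℝ) + 1)) - 1 + x / ((ℓ : ℝ) + 1))

theorem stmt_19 (s : ℂ) (hs1 : -2 < s.re) (hs2 : s.re < -1) :
    ∫ x : ℝ in Set.Ioi (0 : ℝ), (Dfun x : ℂ) * (x : ℂ) ^ (s - 1) =
        (∑' ℓ : ℕ, (ArithmeticFunction.moebius (ℓ + 1) : ℂ) * ((ℓ : ℂ) + 1) ^ s) *
          Complex.Gamma s ∧
      ∫ x : ℝ in Set.Ioi (0 : ℝ), (Dfun x : ℂ) * (x : ℂ) ^ (s - 1) =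
        Complex.Gamma s / riemannZeta (-s) := by
  set σ : ℝ := s.re with hσ
  set F : ℕ → ℝ → ℂ := fun n x => (ArithmeticFunction.moebius (n + 1) : ℂ) *
    (((Real.exp (-x / ((n:ℝ)+1)) - 1 + x / ((n:ℝ)+1)) : ℝ) : ℂ) * (x:ℂ) ^ (s - 1) with hF_def
  have hcoef : ∀ n : ℕ, |((ArithmeticFunction.moebius (n+1) : ℤ) : ℝ)| ≤ 1 := by
    intro n
    have := ArithmeticFunction.abs_moebius_le_one (n := n + 1)
    exact_mod_cast this
  -- bounds for the exponential factor
  have hgpos : ∀ n : ℕ, ∀ x : ℝ, 0 ≤ x →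
      0 ≤ Real.exp (-x / ((n:ℝ)+1)) - 1 + x / ((n:ℝ)+1) := by
    intro n x hx
    have hN : (0:ℝ) < (n:ℝ) + 1 := by positivity
    have h := expb0 (t := x / ((n:ℝ)+1)) (by positivity)
    rwa [← neg_div] at h
  have hgle2 : ∀ n : ℕ, ∀ x : ℝ, 0 ≤ x →
      Real.exp (-x / ((n:ℝ)+1)) - 1 + x / ((n:ℝ)+1) ≤ x ^ 2 := by
    intro n x hx
    have hN : (1:ℝ) ≤ (n:ℝ) + 1 := by simp
    have h := expb2 (t := x / ((n:ℝ)+1)) (by positivity)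
    rw [← neg_div] at h
    refine h.trans ?_
    have h1 : x / ((n:ℝ)+1) ≤ x := by
      rw [div_le_iff₀ (by positivity)]; nlinarith
    nlinarith [div_nonneg hx (by positivity : (0:ℝ) ≤ (n:ℝ)+1)]
  have hgle1 : ∀ n : ℕ, ∀ x : ℝ, 0 ≤ x →
      Real.exp (-x / ((n:ℝ)+1)) - 1 + x / ((n:ℝ)+1) ≤ x := by
    intro n x hx
    have hN : (1:ℝ) ≤ (n:ℝ) + 1 := by simp
    have h := expb1 (t := x / ((n:ℝ)+1)) (by positivity)
    rw [← neg_div] at h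
    refine h.trans ?_
    rw [div_le_iff₀ (by positivity)]; nlinarith
  -- norm formula
  have hnormF : ∀ n : ℕ, ∀ x : ℝ, 0 < x → ‖F n x‖ =
      |((ArithmeticFunction.moebius (n+1) : ℤ) : ℝ)| *
        ((Real.exp (-x / ((n:ℝ)+1)) - 1 + x / ((n:ℝ)+1)) * x ^ (σ - 1)) := by
    intro n x hx
    simp only [hF_def]
    rw [norm_mul, norm_mul]
    rw [show ((ArithmeticFunction.moebius (n+1) : ℤ) : ℂ)
      = (((ArithmeticFunction.moebius (n+1) : ℤ) : ℝ) : ℂ) by push_cast; rfl]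
    rw [Complex.norm_real, Complex.norm_real, Real.norm_eq_abs,
      Real.norm_eq_abs, Complex.norm_cpow_eq_rpow_re_of_pos hx,
      abs_of_nonneg (hgpos n x hx.le)]
    rw [Complex.sub_re, Complex.one_re]
    ring
  -- integrability of each term
  have hFint : ∀ n : ℕ, Integrable (F n) (volume.restrict (Set.Ioi 0)) := by
    intro n
    have hmeas : AEStronglyMeasurable (F n) (volume.restrict (Set.Ioi 0)) := by
      simp only [hF_def]
      exact (aestronglyMeasurable_const.mul ((Complex.continuous_ofReal.comp
        (by continuity)).aestronglyMeasurable.restrict)).mul (aesm_cpow (s-1))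
    apply aux_int (C := 1) (p := σ + 1) (q := σ) hmeas (by simp only [hσ]; linarith) hs2
    · intro x hx hx1
      rw [hnormF n x hx, one_mul]
      calc |((ArithmeticFunction.moebius (n+1) : ℤ) : ℝ)| *
            ((Real.exp (-x / ((n:ℝ)+1)) - 1 + x / ((n:ℝ)+1)) * x ^ (σ - 1))
          ≤ 1 * ((x ^ 2) * x ^ (σ - 1)) := by
            apply mul_le_mul (hcoef n) ?_
              (mul_nonneg (hgpos n x hx.le) (Real.rpow_nonneg hx.le _)) zero_le_one
            exact mul_le_mul_of_nonneg_right (hgle2 n x hx.le) (Real.rpow_nonneg hx.le _)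
        _ = x ^ (σ + 1) := by
            rw [one_mul, ← Real.rpow_two, ← Real.rpow_add hx]; ring_nf
    · intro x hx1
      have hx : (0:ℝ) < x := lt_of_lt_of_le one_pos hx1
      rw [hnormF n x hx, one_mul]
      calc |((ArithmeticFunction.moebius (n+1) : ℤ) : ℝ)| *
            ((Real.exp (-x / ((n:ℝ)+1)) - 1 + x / ((n:ℝ)+1)) * x ^ (σ - 1))
          ≤ 1 * (x * x ^ (σ - 1)) := by
            apply mul_le_mul (hcoef n) ?_
              (mul_nonneg (hgpos n x hx.le) (Real.rpow_nonneg hx.le _)) zero_le_one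
            exact mul_le_mul_of_nonneg_right (hgle1 n x hx.le) (Real.rpow_nonneg hx.le _)
        _ = x ^ σ := by
            rw [one_mul, ← Real.rpow_one_add' (by positivity) (by intro h; simp only [hσ] at h ⊢; linarith)]
            ring_nf
  set C0 : ℝ := ∫ x in Set.Ioi (0:ℝ), (Real.exp (-x) - 1 + x) * x ^ (σ - 1) with hC0
  have hC0nn : 0 ≤ C0 := by
    apply setIntegral_nonneg measurableSet_Ioi
    intro x hx
    exact mul_nonneg (expb0 (le_of_lt hx)) (Real.rpow_nonneg (le_of_lt hx) _)
  -- value of the norm integrals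
  have hnormval : ∀ n : ℕ, ∫ x in Set.Ioi (0:ℝ), ‖F n x‖ =
      |((ArithmeticFunction.moebius (n+1) : ℤ) : ℝ)| * (((n:ℝ) + 1) ^ σ * C0) := by
    intro n
    rw [setIntegral_congr_fun measurableSet_Ioi
      (g := fun x => |((ArithmeticFunction.moebius (n+1) : ℤ) : ℝ)| *
        ((Real.exp (-x / ((n:ℝ)+1)) - 1 + x / ((n:ℝ)+1)) * x ^ (σ - 1)))
      (fun x hx => hnormF n x hx)]
    rw [MeasureTheory.integral_const_mul]
    congr 1
    exact G4r n σ
  have hsumnorm : Summable fun n => ∫ x in Set.Ioi (0:ℝ), ‖F n x‖ := by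
    have hmaj : Summable (fun n : ℕ => ((n:ℝ) + 1) ^ σ * C0) := by
      have h0 : Summable (fun m : ℕ => (m:ℝ) ^ σ) := summable_nat_rpow.mpr hs2
      have h1 : Summable (fun n : ℕ => ((n + 1 : ℕ) : ℝ) ^ σ) :=
        h0.comp_injective Nat.succ_injective
      have h2 : Summable (fun n : ℕ => ((n:ℝ) + 1) ^ σ) := by
        convert h1 using 2 with n
        push_cast; ring
      exact h2.mul_right C0
    apply Summable.of_nonneg_of_le ?_ ?_ hmaj
    · intro n
      exact MeasureTheory.integral_nonneg (fun x => norm_nonneg _)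
    · intro n
      rw [hnormval n]
      apply mul_le_of_le_one_left ?_ (hcoef n)
      positivity
  have hswap := MeasureTheory.integral_tsum_of_summable_integral_norm hFint hsumnorm
  -- pointwise identity
  have hpt : ∀ x ∈ Set.Ioi (0:ℝ), (Dfun x : ℂ) * (x : ℂ) ^ (s - 1) = ∑' n, F n x := by
    intro x _
    have step1 : ∑' n, F n x = ∑' n, (((ArithmeticFunction.moebius (n+1) : ℝ) *
        (Real.exp (-x / ((n:ℝ)+1)) - 1 + x / ((n:ℝ)+1)) : ℝ) : ℂ) * (x:ℂ) ^ (s-1) := by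
      apply tsum_congr
      intro n
      simp only [hF_def]
      push_cast
      ring
    rw [step1, tsum_mul_right, ← Complex.ofReal_tsum]
    rfl
  have hmain : ∫ x : ℝ in Set.Ioi (0 : ℝ), (Dfun x : ℂ) * (x : ℂ) ^ (s - 1) =
      (∑' ℓ : ℕ, (ArithmeticFunction.moebius (ℓ + 1) : ℂ) * ((ℓ : ℂ) + 1) ^ s) *
        Complex.Gamma s := by
    rw [setIntegral_congr_fun measurableSet_Ioi hpt, ← hswap]
    have hterm : ∀ n : ℕ, ∫ x in Set.Ioi (0:ℝ), F n x =
        (ArithmeticFunction.moebius (n + 1) : ℂ) * (((n:ℂ) + 1) ^ s * Complex.Gamma s) := by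
      intro n
      have : ∀ x : ℝ, F n x = (ArithmeticFunction.moebius (n + 1) : ℂ) *
          ((((Real.exp (-x / ((n:ℝ)+1)) - 1 + x / ((n:ℝ)+1)) : ℝ) : ℂ) * (x:ℂ) ^ (s - 1)) := by
        intro x; simp only [hF_def]; ring
      rw [MeasureTheory.integral_congr_ae (Eventually.of_forall this),
        MeasureTheory.integral_const_mul, G4 n hs1 hs2]
    calc ∑' n, ∫ x in Set.Ioi (0:ℝ), F n x
        = ∑' n, (ArithmeticFunction.moebius (n + 1) : ℂ) * ((n:ℂ) + 1) ^ s
            * Complex.Gamma s := by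
          apply tsum_congr; intro n; rw [hterm n]; ring
      _ = _ := tsum_mul_right
  refine ⟨hmain, ?_⟩
  rw [hmain, moebius_sum_eq hs2, div_eq_mul_inv]
  ring
end
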